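/- Fix λ with 2 < λ ≤ 3, an integer n ≥ 1, and a branch itinerary i₁, …, i_{n−1} ∈ {0,1,2}. Suppose b and b′ are admissible parameters (|b|, |b′| ≤ (3−λ)/(λ−1)) such that: for each 1 ≤ k ≤ n−1 the iterates q_{λ,b}^k(c¹(b)) and q_{λ,b′}^k(c¹(b′)) lie in the closed branch interval of index i_k of the respective maps (index 0 means [−a,c¹], index 1 means [c¹,c²], index 2 means [c²,a]), and the turning points are periodic of period n along this itinerary: q_{λ,b}^n(c¹(b)) = c¹(b) and q_{λ,b′}^n(c¹(b′)) = c¹(b′). Then b = b′. In other words, for slopes λ > 2 (entropy larger than log 2), a given periodic itinerary of the turning point c¹ is realized by at most one parameter b — there are no exceptional turning points. -/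

import Mathlib

/-- The bimodal piecewise-linear map `q_{λ,b}` of constant slope `±λ`:
`q(x) = λx+1` for `x ≤ c¹`, `q(x) = −λx+b` for `c¹ ≤ x ≤ c²`, `q(x) = λx−1` for `x ≥ c²`,
where `c¹ = (b−1)/(2λ)` and `c² = (b+1)/(2λ)` (the formulas agree at `c¹` and `c²`). -/
noncomputable def qmap (lam b : ℝ) (x : ℝ) : ℝ :=
  if x ≤ (b - 1) / (2 * lam) then lam * x + 1
  else if x ≤ (b + 1) / (2 * lam) then -lam * x + b
  else lam * x - 1

/-- The closed branch intervals of `q_{λ,b}`: index `0` is `[−a, c¹]`, index `1` is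
`[c¹, c²]`, index `2` is `[c², a]`, where `a = 1/(λ−1)`. -/
noncomputable def branchIcc (lam b : ℝ) : Fin 3 → Set ℝ :=
  ![Set.Icc (-(1 / (lam - 1))) ((b - 1) / (2 * lam)),
    Set.Icc ((b - 1) / (2 * lam)) ((b + 1) / (2 * lam)),
    Set.Icc ((b + 1) / (2 * lam)) (1 / (lam - 1))]

lemma fin3_cases (j : Fin 3) : j = 0 ∨ j = 1 ∨ j = 2 := by
  fin_cases j <;> simp

lemma qmap0 {lam b x : ℝ} (h : x ≤ (b - 1) / (2 * lam)) : qmap lam b x = lam * x + 1 := by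
  simp [qmap, h]

lemma qmap1 {lam b x : ℝ} (hl : 0 < lam) (h1 : (b - 1) / (2 * lam) ≤ x)
    (h2 : x ≤ (b + 1) / (2 * lam)) : qmap lam b x = -lam * x + b := by
  unfold qmap
  split_ifs with hc hc2
  · have hx : x = (b - 1) / (2 * lam) := le_antisymm hc h1
    subst hx
    field_simp
    ring
  · rfl

lemma qmap2 {lam b x : ℝ} (hl : 0 < lam) (h : (b + 1) / (2 * lam) ≤ x) :
    qmap lam b x = lam * x - 1 := by
  have h2l : (0:ℝ) < 2 * lam := by linarith
  unfold qmap
  split_ifs with hc hc2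
  · exfalso
    have : (b + 1) / (2 * lam) ≤ (b - 1) / (2 * lam) := le_trans h hc
    rw [div_le_div_iff₀ h2l h2l] at this
    nlinarith
  · have hx : x = (b + 1) / (2 * lam) := le_antisymm hc2 h
    subst hx
    field_simp
    ring
  · rfl

set_option maxHeartbeats 800000 in
/-- No exceptional turning points for `λ > 2`: fix `2 < λ ≤ 3`, `n ≥ 1` and a branch
itinerary `i₁, …, i_{n−1} ∈ {0,1,2}`. If two admissible parameters `b, b′` are such that
both turning-point orbits follow this itinerary for `1 ≤ k ≤ n−1` and both turning points
are periodic of period `n` (`q_{λ,b}^n(c¹(b)) = c¹(b)` and `q_{λ,b′}^n(c¹(b′)) = c¹(b′)`),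
then `b = b′`. -/
theorem periodic_itinerary_unique_parameter (lam b b' : ℝ) (n : ℕ) (hn : 1 ≤ n)
    (h2 : 2 < lam) (h3 : lam ≤ 3)
    (hb : |b| ≤ (3 - lam) / (lam - 1)) (hb' : |b'| ≤ (3 - lam) / (lam - 1))
    (i : ℕ → Fin 3)
    (hx : ∀ k : ℕ, 1 ≤ k → k ≤ n - 1 →
      (qmap lam b)^[k] ((b - 1) / (2 * lam)) ∈ branchIcc lam b (i k))
    (hy : ∀ k : ℕ, 1 ≤ k → k ≤ n - 1 →
      (qmap lam b')^[k] ((b' - 1) / (2 * lam)) ∈ branchIcc lam b' (i k))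
    (hper : (qmap lam b)^[n] ((b - 1) / (2 * lam)) = (b - 1) / (2 * lam))
    (hper' : (qmap lam b')^[n] ((b' - 1) / (2 * lam)) = (b' - 1) / (2 * lam)) :
    b = b' := by
  wlog hlt : b' ≤ b with H
  · exact (H lam b' b n hn h2 h3 hb' hb i hy hx hper' hper (le_of_not_ge hlt)).symm
  by_contra hne
  have hδ : 0 < b - b' := lt_of_le_of_ne (by linarith) (by intro h; exact hne (by linarith))
  have hl : (0:ℝ) < lam := by linarith
  have hlne : lam ≠ 0 := ne_of_gt hl
  have P2 : 0 < (b - b') * (lam - 1) := mul_pos hδ (by linarith)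
  have P3 : 0 < (b - b') * (lam - 2) := mul_pos hδ (by linarith)
  have P4 : 0 < (b - b') * (lam - 2) * (lam - 1) := mul_pos P3 (by linarith)
  have P5 : 0 < (b - b') * (lam - 2) * lam := mul_pos P3 hl
  have key : ∀ k, 1 ≤ k → k ≤ n →
      ((qmap lam b)^[k] ((b - 1) / (2 * lam)) - (qmap lam b')^[k] ((b' - 1) / (2 * lam))
        ≥ (b - b') / 2 ∨
       (qmap lam b)^[k] ((b - 1) / (2 * lam)) - (qmap lam b')^[k] ((b' - 1) / (2 * lam))
        ≤ -((lam - 2) / 2 * (b - b'))) := by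
    intro k
    induction k with
    | zero => omega
    | succ m ih =>
      intro _ hm1
      rcases Nat.eq_zero_or_pos m with hm0 | hmpos
      · subst hm0
        left
        simp only [zero_add, Function.iterate_one]
        rw [qmap0 (le_refl _), qmap0 (le_refl _)]
        have e1 : lam * ((b - 1) / (2 * lam)) = (b - 1) / 2 := by field_simp
        have e2 : lam * ((b' - 1) / (2 * lam)) = (b' - 1) / 2 := by field_simp
        rw [e1, e2]; ring_nf; linarith
      · have hmn : m ≤ n - 1 := by omega
        have ihm := ih hmpos (by omega)
        have hxm := hx m hmpos hmn
        have hym := hy m hmpos hmn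
        set X := (qmap lam b)^[m] ((b - 1) / (2 * lam)) with hX
        set Y := (qmap lam b')^[m] ((b' - 1) / (2 * lam)) with hY
        rw [Function.iterate_succ_apply', Function.iterate_succ_apply', ← hX, ← hY]
        rcases fin3_cases (i m) with h0 | h1 | h2'
        · rw [h0] at hxm hym
          simp only [branchIcc, Matrix.cons_val_zero, Set.mem_Icc] at hxm hym
          rw [qmap0 hxm.2, qmap0 hym.2]
          rcases ihm with hc | hc
          · left; nlinarith [mul_le_mul_of_nonneg_left hc hl.le, P2]
          · right; nlinarith [mul_le_mul_of_nonneg_left hc hl.le, P4]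
        · rw [h1] at hxm hym
          simp only [branchIcc, Matrix.cons_val_one, Matrix.head_cons, Set.mem_Icc] at hxm hym
          rw [qmap1 hl hxm.1 hxm.2, qmap1 hl hym.1 hym.2]
          rcases ihm with hc | hc
          · right; nlinarith [mul_le_mul_of_nonneg_left hc hl.le]
          · left; nlinarith [mul_le_mul_of_nonneg_left hc hl.le, P3, P5]
        · rw [h2'] at hxm hym
          simp only [branchIcc, Matrix.cons_val_two, Matrix.tail_cons, Matrix.head_cons,
            Set.mem_Icc] at hxm hym
          rw [qmap2 hl hxm.1, qmap2 hl hym.1]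
          rcases ihm with hc | hc
          · left; nlinarith [mul_le_mul_of_nonneg_left hc hl.le, P2]
          · right; nlinarith [mul_le_mul_of_nonneg_left hc hl.le, P4]
  have hkn := key n hn le_rfl
  rw [hper, hper'] at hkn
  have hd : (b - 1) / (2 * lam) - (b' - 1) / (2 * lam) = (b - b') / (2 * lam) := by
    field_simp
    ring
  rw [hd] at hkn
  have h2l : (0:ℝ) < 2 * lam := by linarith
  rcases hkn with hc | hc
  · rw [ge_iff_le, div_le_div_iff₀ (by norm_num) h2l] at hc
    nlinarith
  · have hpos : 0 < (b - b') / (2 * lam) := div_pos hδ h2l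
    nlinarith
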